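/- Let p and q be coprime integers with p > q > 1. For every n ∈ ℕ, the set {ρ(w) : w labels a branch of T_{p/q} from n} equals the closed interval [ρ(minword(n)), ρ(maxword(n))]. -/

import Mathlib

/-- `w` labels a branch of the base-p/q automaton with digit set `E` from state `n`:
there are states `s 0 = n, s 1, s 2, …` with `q·s(k+1) = p·s k + w k` and `w k ∈ E`. -/
def IsBranch (p q : ℕ) (E : Set ℤ) (n : ℕ) (w : ℕ → ℤ) : Prop :=
  ∃ s : ℕ → ℕ, s 0 = n ∧ ∀ k : ℕ, (q : ℤ) * s (k + 1) = p * s k + w k ∧ w k ∈ E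

/-- `u` (a word of length `ℓ`) labels a path from `n` to `m` in the base-p/q automaton
with digit set `E`. -/
def IsPath (p q : ℕ) (E : Set ℤ) (n m ℓ : ℕ) (u : ℕ → ℤ) : Prop :=
  ∃ s : ℕ → ℕ, s 0 = n ∧ s ℓ = m ∧
    ∀ k < ℓ, (q : ℤ) * s (k + 1) = p * s k + u k ∧ u k ∈ E

/-- The canonical digit alphabet `A_p = {0, 1, …, p−1}`. -/
def Ap (p : ℕ) : Set ℤ := Set.Icc 0 ((p : ℤ) - 1)

/-- The lower alphabet `{0, 1, …, q−1}`. -/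
def LowAlph (q : ℕ) : Set ℤ := Set.Icc 0 ((q : ℤ) - 1)

/-- The upper alphabet `{p−q, …, p−1}`. -/
def UpAlph (p q : ℕ) : Set ℤ := Set.Icc ((p : ℤ) - q) ((p : ℤ) - 1)

/-- The alphabet `D = {p−2q+1, …, p−1}` of the automaton `S_{p/q}`. -/
def Dalph (p q : ℕ) : Set ℤ := Set.Icc ((p : ℤ) - 2 * q + 1) ((p : ℤ) - 1)

/-- Evaluation after the radix point: `ρ(w) = Σ_{i≥1} (w_i/q)·(q/p)^i`
(here `w k` is the `(k+1)`-st digit). -/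
noncomputable def rho (p q : ℕ) (w : ℕ → ℤ) : ℝ :=
  ∑' i : ℕ, ((w i : ℝ) / q) * ((q : ℝ) / p) ^ (i + 1)

section Aux
variable {p q : ℕ}

lemma c_pos (hq : 1 < q) (hpq : q < p) : 0 < (q:ℝ)/p := by
  have h1 : (0:ℝ) < q := by exact_mod_cast Nat.lt_of_lt_of_le Nat.zero_lt_one hq.le
  have h2 : (0:ℝ) < p := by exact_mod_cast (by omega : 0 < p)
  exact div_pos h1 h2

lemma c_lt_one (hq : 1 < q) (hpq : q < p) : (q:ℝ)/p < 1 := by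
  rw [div_lt_one (by exact_mod_cast (by omega : 0 < p))]
  exact_mod_cast hpq

lemma summable_rho (hq : 1 < q) (hpq : q < p) (w : ℕ → ℤ) (hw : ∀ i, |(w i : ℝ)| ≤ p) :
    Summable (fun i => ((w i : ℝ) / q) * ((q : ℝ) / p) ^ (i + 1)) := by
  have hc0 := c_pos (p := p) (q := q) hq hpq
  have hc1 := c_lt_one (p := p) (q := q) hq hpq
  have hg : Summable (fun i : ℕ => ((p:ℝ)/q) * ((q:ℝ)/p) ^ (i+1)) := by
    apply Summable.mul_left
    exact (summable_geometric_of_lt_one hc0.le hc1).comp_injective (add_left_injective 1)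
  apply Summable.of_norm_bounded hg
  intro i
  rw [norm_mul, norm_div, norm_pow]
  have hq0 : (0:ℝ) < q := by exact_mod_cast (by omega : 0 < q)
  simp only [Real.norm_eq_abs, abs_of_nonneg hc0.le, abs_of_nonneg hq0.le]
  gcongr
  exact hw i

lemma partial_eq (hq : 1 < q) (hpq : q < p) (w : ℕ → ℤ) (s : ℕ → ℕ)
    (hrec : ∀ k, (q:ℤ) * s (k+1) = p * s k + w k) (N : ℕ) :
    ∑ i ∈ Finset.range N, ((w i : ℝ)/q) * ((q:ℝ)/p)^(i+1)
      = ((q:ℝ)/p)^N * s N - s 0 := by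
  induction N with
  | zero => simp
  | succ N ih =>
      rw [Finset.sum_range_succ, ih]
      have h := hrec N
      have hr : (q:ℝ) * s (N+1) = p * s N + w N := by exact_mod_cast h
      have hq0 : (0:ℝ) < q := by exact_mod_cast (by omega : 0 < q)
      have hp0 : (0:ℝ) < p := by exact_mod_cast (by omega : 0 < p)
      have hsN : ((s (N+1) : ℝ)) = ((p:ℝ) * s N + w N) / q := by
        field_simp [hq0.ne'] at hr ⊢; linarith
      rw [pow_succ, hsN]
      field_simp
      ring

lemma tendsto_cn_s (hq : 1 < q) (hpq : q < p) (w : ℕ → ℤ) (s : ℕ → ℕ)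
    (hrec : ∀ k, (q:ℤ) * s (k+1) = p * s k + w k)
    (hw : ∀ i, |(w i : ℝ)| ≤ p) :
    Filter.Tendsto (fun N => ((q:ℝ)/p)^N * s N) Filter.atTop (nhds ((s 0 : ℝ) + rho p q w)) := by
  have hsum := summable_rho hq hpq w hw
  have h1 := hsum.hasSum.tendsto_sum_nat
  have h2 : ∀ N, ((q:ℝ)/p)^N * s N
      = (∑ i ∈ Finset.range N, ((w i : ℝ)/q) * ((q:ℝ)/p)^(i+1)) + s 0 := by
    intro N; rw [partial_eq hq hpq w s hrec N]; ring
  simp only [h2]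
  have : Filter.Tendsto (fun N => (∑ i ∈ Finset.range N, ((w i : ℝ)/q) * ((q:ℝ)/p)^(i+1)) + (s 0:ℝ))
      Filter.atTop (nhds (rho p q w + s 0)) := h1.add_const _
  simpa [add_comm] using this

lemma rho_le_rho (hq : 1 < q) (hpq : q < p) (w v : ℕ → ℤ) (s t : ℕ → ℕ)
    (hrecs : ∀ k, (q:ℤ) * s (k+1) = p * s k + w k)
    (hrect : ∀ k, (q:ℤ) * t (k+1) = p * t k + v k)
    (hws : ∀ i, |(w i : ℝ)| ≤ p) (hvs : ∀ i, |(v i : ℝ)| ≤ p)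
    (C : ℝ) (hle : ∀ N, (s N : ℝ) ≤ t N + C) :
    (s 0 : ℝ) + rho p q w ≤ (t 0 : ℝ) + rho p q v := by
  have hc0 := c_pos (p := p) (q := q) hq hpq
  have hc1 := c_lt_one (p := p) (q := q) hq hpq
  have h1 := tendsto_cn_s hq hpq w s hrecs hws
  have h2 := tendsto_cn_s hq hpq v t hrect hvs
  have h3 : Filter.Tendsto (fun N : ℕ => ((q:ℝ)/p)^N * C) Filter.atTop (nhds 0) := by
    simpa using (tendsto_pow_atTop_nhds_zero_of_lt_one hc0.le hc1).mul_const C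
  have h4 : Filter.Tendsto (fun N : ℕ => ((q:ℝ)/p)^N * t N + ((q:ℝ)/p)^N * C)
      Filter.atTop (nhds ((t 0 : ℝ) + rho p q v + 0)) := h2.add h3
  rw [add_zero] at h4
  refine le_of_tendsto_of_tendsto' h1 h4 ?_
  intro N
  have := hle N
  have hpow : (0:ℝ) ≤ ((q:ℝ)/p)^N := pow_nonneg hc0.le N
  nlinarith

lemma rho_shift (hq : 1 < q) (hpq : q < p) (w : ℕ → ℤ) (hw : ∀ i, |(w i : ℝ)| ≤ p) :
    rho p q w = (w 0 : ℝ)/p + ((q:ℝ)/p) * rho p q (fun k => w (k+1)) := by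
  have hsum := summable_rho hq hpq w hw
  have hq0 : (0:ℝ) < q := by exact_mod_cast (by omega : 0 < q)
  have hp0 : (0:ℝ) < p := by exact_mod_cast (by omega : 0 < p)
  rw [rho, Summable.tsum_eq_zero_add hsum]
  have : ∑' i : ℕ, ((w (i+1) : ℝ)/q) * ((q:ℝ)/p)^(i+1+1)
      = ((q:ℝ)/p) * ∑' i : ℕ, ((w (i+1) : ℝ)/q) * ((q:ℝ)/p)^(i+1) := by
    rw [← tsum_mul_left]
    congr 1; funext i; ring
  rw [this, rho]
  congr 1
  field_simp
  have hpq' : (p:ℝ) * ((q:ℝ)/p) = q := by field_simp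
  rw [zero_add, pow_one, mul_assoc, hpq']

lemma rho_nonneg (hq : 1 < q) (hpq : q < p) (w : ℕ → ℤ) (hw : ∀ i, 0 ≤ w i) :
    0 ≤ rho p q w := by
  have hc0 := c_pos (p := p) (q := q) hq hpq
  apply tsum_nonneg
  intro i
  have : (0:ℝ) ≤ (w i : ℝ) := by exact_mod_cast hw i
  positivity

noncomputable def Bnd (p q : ℕ) : ℝ := ∑' i : ℕ, ((p:ℝ)/q) * ((q:ℝ)/p)^(i+1)

lemma rho_le_Bnd (hq : 1 < q) (hpq : q < p) (w : ℕ → ℤ)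
    (hw0 : ∀ i, 0 ≤ w i) (hwp : ∀ i, |(w i : ℝ)| ≤ p) :
    rho p q w ≤ Bnd p q := by
  have hc0 := c_pos (p := p) (q := q) hq hpq
  have hc1 := c_lt_one (p := p) (q := q) hq hpq
  have hq0 : (0:ℝ) < q := by exact_mod_cast (by omega : 0 < q)
  have hg : Summable (fun i : ℕ => ((p:ℝ)/q) * ((q:ℝ)/p) ^ (i+1)) := by
    apply Summable.mul_left
    exact (summable_geometric_of_lt_one hc0.le hc1).comp_injective (add_left_injective 1)
  apply Summable.tsum_le_tsum _ (summable_rho hq hpq w hwp) hg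
  intro i
  have h0 : (0:ℝ) ≤ (w i : ℝ) := by exact_mod_cast hw0 i
  have h1 : (w i : ℝ) ≤ p := by have := hwp i; rw [abs_of_nonneg h0] at this; exact this
  gcongr

lemma branch_unique (hq : 1 < q) (hpq : q < p) (e : ℤ) (w v : ℕ → ℤ) (s t : ℕ → ℕ)
    (h0 : s 0 = t 0)
    (hrecs : ∀ k, (q:ℤ) * s (k+1) = p * s k + w k ∧ w k ∈ Set.Icc e (e + q - 1))
    (hrect : ∀ k, (q:ℤ) * t (k+1) = p * t k + v k ∧ v k ∈ Set.Icc e (e + q - 1)) :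
    ∀ k, s k = t k ∧ w k = v k := by
  have key : ∀ k, s k = t k := by
    intro k
    induction k with
    | zero => exact h0
    | succ k ih =>
        obtain ⟨h1, h2, h3⟩ := hrecs k
        obtain ⟨h4, h5, h6⟩ := hrect k
        have hsk : (s k : ℤ) = t k := by exact_mod_cast ih
        have hqq : (1:ℤ) < q := by exact_mod_cast hq
        have : (q:ℤ) * s (k+1) - q * t (k+1) = w k - v k := by rw [h1, h4, hsk]; ring
        have hb : -(q:ℤ) < (q:ℤ) * ((s (k+1):ℤ) - t (k+1)) ∧ (q:ℤ) * ((s (k+1):ℤ) - t (k+1)) < q := by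
          constructor <;> nlinarith [this]
        have : ((s (k+1):ℤ) - t (k+1)) = 0 := by
          rcases lt_trichotomy ((s (k+1):ℤ) - t (k+1)) 0 with h | h | h
          · exfalso; nlinarith [hb.1]
          · exact h
          · exfalso; nlinarith [hb.2]
        omega
  intro k
  refine ⟨key k, ?_⟩
  obtain ⟨h1, _⟩ := hrecs k
  obtain ⟨h4, _⟩ := hrect k
  have e1 : (s (k+1) : ℤ) = t (k+1) := by exact_mod_cast key (k+1)
  have e2 : (s k : ℤ) = t k := by exact_mod_cast key k
  rw [e1, e2] at h1
  linarith

lemma state_le (hq : 1 < q) (hpq : q < p) (s t : ℕ → ℕ) (w v : ℕ → ℤ)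
    (hrecs : ∀ k, (q:ℤ) * s (k+1) = p * s k + w k)
    (hrect : ∀ k, (q:ℤ) * t (k+1) = p * t k + v k)
    (e : ℤ) (h0 : (s 0 : ℤ) ≤ t 0 + e)
    (hd : ∀ k, w k ≤ v k + q*e - p*e + q - 1) :
    ∀ N, (s N : ℤ) ≤ t N + e := by
  intro N
  induction N with
  | zero => exact h0
  | succ N ih =>
      have hp0 : (0:ℤ) < p := by exact_mod_cast (by omega : 0 < p)
      have hq0 : (0:ℤ) < q := by exact_mod_cast (by omega : 0 < q)
      have h1 := hrecs N
      have h2 := hrect N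
      have h3 : (p:ℤ) * s N ≤ p * (t N + e) := mul_le_mul_of_nonneg_left ih hp0.le
      have h4 : (q:ℤ) * s (N+1) < q * (t (N+1) + e + 1) := by
        have : (q:ℤ) * (t (N+1) + e + 1) = q * t (N+1) + q*e + q := by ring
        rw [this]
        have h5 : (p:ℤ) * (t N + e) = p * t N + p * e := by ring
        linarith [hd N]
      have := lt_of_mul_lt_mul_left h4 hq0.le
      omega

end Aux

theorem stmt19 (p q : ℕ) (hco : Nat.Coprime p q) (hq : 1 < q) (hpq : q < p)
    (mw mx : ℕ → ℕ → ℤ)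
    (hmw : ∀ n, IsBranch p q (LowAlph q) n (mw n))
    (hmx : ∀ n, IsBranch p q (UpAlph p q) n (mx n)) :
    ∀ n : ℕ,
      {x : ℝ | ∃ w : ℕ → ℤ, IsBranch p q (Ap p) n w ∧ x = rho p q w}
        = Set.Icc (rho p q (mw n)) (rho p q (mx n)) := by
  classical
  have hc0 : 0 < (q:ℝ)/p := c_pos hq hpq
  have hc1 : (q:ℝ)/p < 1 := c_lt_one hq hpq
  have hq0R : (0:ℝ) < q := by exact_mod_cast (by omega : 0 < q)
  have hp0R : (0:ℝ) < p := by exact_mod_cast (by omega : 0 < p)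
  choose tmin htmin0 htminK using hmw
  choose tmax htmax0 htmaxK using hmx
  have hrecmin : ∀ m k, (q:ℤ) * tmin m (k+1) = p * tmin m k + mw m k := fun m k => (htminK m k).1
  have hrecmax : ∀ m k, (q:ℤ) * tmax m (k+1) = p * tmax m k + mx m k := fun m k => (htmaxK m k).1
  have hmwd : ∀ m k, 0 ≤ mw m k ∧ mw m k ≤ (q:ℤ) - 1 := by
    intro m k; have := (htminK m k).2; simpa [LowAlph, Set.mem_Icc] using this
  have hmxd : ∀ m k, (p:ℤ) - q ≤ mx m k ∧ mx m k ≤ (p:ℤ) - 1 := by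
    intro m k; have := (htmaxK m k).2; simpa [UpAlph, Set.mem_Icc] using this
  have habsmw : ∀ m i, |(mw m i : ℝ)| ≤ p := by
    intro m i
    have h := hmwd m i
    have : |mw m i| ≤ (p:ℤ) := by rw [abs_le]; omega
    rw [← Int.cast_abs]
    exact_mod_cast this
  have habsmx : ∀ m i, |(mx m i : ℝ)| ≤ p := by
    intro m i
    have h := hmxd m i
    have : |mx m i| ≤ (p:ℤ) := by rw [abs_le]; omega
    rw [← Int.cast_abs]
    exact_mod_cast this
  -- covering inequality
  have hcover : ∀ m : ℕ, 1 + rho p q (mw (m+1)) ≤ rho p q (mx m) := by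
    intro m
    have hst := state_le hq hpq (tmin (m+1)) (tmax m) (mw (m+1)) (mx m)
      (hrecmin (m+1)) (hrecmax m) 1
      (by rw [htmin0, htmax0]; push_cast; omega)
      (by intro k; have := hmwd (m+1) k; have := hmxd m k; omega)
    have := rho_le_rho hq hpq (mw (m+1)) (mx m) (tmin (m+1)) (tmax m)
      (hrecmin (m+1)) (hrecmax m) (habsmw (m+1)) (habsmx m) 1
      (by intro N; exact_mod_cast hst N)
    rw [htmin0, htmax0] at this
    push_cast at this
    linarith
  -- shift identities
  have hshiftmin : ∀ m, rho p q (mw m) = (mw m 0 : ℝ)/p + ((q:ℝ)/p) * rho p q (mw (tmin m 1)) := by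
    intro m
    have h1 := rho_shift hq hpq (mw m) (habsmw m)
    have h2 := branch_unique hq hpq 0 (fun k => mw m (k+1)) (mw (tmin m 1))
      (fun k => tmin m (k+1)) (tmin (tmin m 1)) (by rw [htmin0])
      (by intro k; refine ⟨hrecmin m (k+1), ?_⟩
          have := hmwd m (k+1); simp [Set.mem_Icc]; omega)
      (by intro k; refine ⟨hrecmin (tmin m 1) k, ?_⟩
          have := hmwd (tmin m 1) k; simp [Set.mem_Icc]; omega)
    have h3 : (fun k => mw m (k+1)) = mw (tmin m 1) := funext (fun k => (h2 k).2)
    rw [h1, h3]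
  have hshiftmax : ∀ m, rho p q (mx m) = (mx m 0 : ℝ)/p + ((q:ℝ)/p) * rho p q (mx (tmax m 1)) := by
    intro m
    have h1 := rho_shift hq hpq (mx m) (habsmx m)
    have h2 := branch_unique hq hpq ((p:ℤ) - q) (fun k => mx m (k+1)) (mx (tmax m 1))
      (fun k => tmax m (k+1)) (tmax (tmax m 1)) (by rw [htmax0])
      (by intro k; refine ⟨hrecmax m (k+1), ?_⟩
          have := hmxd m (k+1); simp [Set.mem_Icc]; omega)
      (by intro k; refine ⟨hrecmax (tmax m 1) k, ?_⟩
          have := hmxd (tmax m 1) k; simp [Set.mem_Icc]; omega)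
    have h3 : (fun k => mx m (k+1)) = mx (tmax m 1) := funext (fun k => (h2 k).2)
    rw [h1, h3]
  -- one-step refinement
  have Hex : ∀ (m : ℕ) (x : ℝ), rho p q (mw m) ≤ x → x ≤ rho p q (mx m) →
      ∃ (a : ℤ) (m' : ℕ), a ∈ Ap p ∧ (q:ℤ) * m' = p * m + a ∧
        (a:ℝ)/p + ((q:ℝ)/p) * rho p q (mw m') ≤ x ∧
        x ≤ (a:ℝ)/p + ((q:ℝ)/p) * rho p q (mx m') := by
    intro m x hx1 hx2
    set r := mw m 0 with hr_def
    set R := mx m 0 with hR_def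
    set m0 := tmin m 1 with hm0_def
    set M0 := tmax m 1 with hM0_def
    have hrec1 : (q:ℤ) * m0 = p * m + r := by
      have := hrecmin m 0; rwa [htmin0] at this
    have hrec2 : (q:ℤ) * M0 = p * m + R := by
      have := hrecmax m 0; rwa [htmax0] at this
    have hrb := hmwd m 0
    have hRb := hmxd m 0
    have hm0M0 : m0 ≤ M0 := by
      by_contra hcon
      push_neg at hcon
      have h1 : (M0:ℤ) + 1 ≤ m0 := by exact_mod_cast hcon
      have h2 : (q:ℤ) * (M0 + 1) ≤ q * m0 :=
        mul_le_mul_of_nonneg_left h1 (by positivity)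
      have h3 : (q:ℤ) * (M0+1) = q * M0 + q := by ring
      omega
    set J := M0 - m0 with hJ_def
    have hM0J : M0 = m0 + J := by omega
    have hR2 : (R:ℤ) = r + q * (J:ℤ) := by
      have h1 : (q:ℤ) * M0 = q * m0 + q * (J:ℤ) := by
        rw [hM0J]; push_cast; ring
      omega
    set φ : ℕ → ℝ := fun j => ((r:ℝ) + j*q)/p + ((q:ℝ)/p) * rho p q (mw (m0+j)) with hφ
    set ψ : ℕ → ℝ := fun j => ((r:ℝ) + j*q)/p + ((q:ℝ)/p) * rho p q (mx (m0+j)) with hψ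
    have hφ0 : φ 0 = rho p q (mw m) := by
      rw [hφ]; simp only [Nat.cast_zero, zero_mul, add_zero, Nat.add_zero]
      rw [hshiftmin m]
    have hψJ : ψ J = rho p q (mx m) := by
      rw [hψ]; simp only []
      rw [hshiftmax m, ← hM0_def, hM0J]
      have : ((R:ℤ):ℝ) = (r:ℝ) + (J:ℝ)*(q:ℝ) := by push_cast [hR2]; ring
      rw [this]
    have hcov : ∀ j, φ (j+1) ≤ ψ j := by
      intro j
      have h := hcover (m0 + j)
      have he : m0 + (j+1) = (m0 + j) + 1 := by omega
      rw [hφ, hψ]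
      simp only [he]
      have hmul : ((q:ℝ)/p) * (1 + rho p q (mw ((m0+j)+1))) ≤ ((q:ℝ)/p) * rho p q (mx (m0+j)) :=
        mul_le_mul_of_nonneg_left h hc0.le
      have hsplit : ((r:ℝ) + (↑(j+1))*q)/p = ((r:ℝ)+j*q)/p + q/p := by
        push_cast; field_simp; ring
      rw [hsplit]
      have hexp : ((q:ℝ)/p) * (1 + rho p q (mw ((m0+j)+1)))
          = q/p + ((q:ℝ)/p) * rho p q (mw ((m0+j)+1)) := by ring
      linarith [hmul, hexp.symm.le]
    set P : ℕ → Prop := fun j => φ j ≤ x with hP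
    have hP0 : P 0 := by rw [hP]; simpa [hφ0] using hx1
    set j0 := Nat.findGreatest P J with hj0
    have hPj : P j0 := Nat.findGreatest_spec (Nat.zero_le J) hP0
    have hjle : j0 ≤ J := Nat.findGreatest_le J
    have hub : x ≤ ψ j0 := by
      rcases eq_or_lt_of_le hjle with hcase | hcase
      · rw [hcase, hψJ]; exact hx2
      · have hng : ¬ P (j0+1) :=
          Nat.findGreatest_is_greatest (Nat.lt_succ_self j0) hcase
        have : x < φ (j0+1) := by
          by_contra hcc; push_neg at hcc; exact hng hcc
        linarith [hcov j0]
    refine ⟨r + (j0:ℤ)*q, m0 + j0, ?_, ?_, ?_, ?_⟩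
    · simp only [Ap, Set.mem_Icc]
      constructor
      · have : (0:ℤ) ≤ (j0:ℤ)*q := by positivity
        omega
      · have h1 : (j0:ℤ) ≤ (J:ℤ) := by exact_mod_cast hjle
        have h2 : (j0:ℤ)*q ≤ (J:ℤ)*q :=
          mul_le_mul_of_nonneg_right h1 (by positivity)
        have h3 : (q:ℤ)*(J:ℤ) = (J:ℤ)*q := mul_comm _ _
        linarith [hRb.2, hR2, hrb.1]
    · push_cast
      linear_combination hrec1
    · have := hPj
      rw [hP, hφ] at this
      simp only [] at this
      push_cast
      convert this using 3
    · have := hub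
      rw [hψ] at this
      simp only [] at this
      push_cast
      convert this using 3
  -- main argument
  intro n
  ext x
  simp only [Set.mem_setOf_eq, Set.mem_Icc]
  constructor
  · rintro ⟨w, ⟨s, hs0, hsk⟩, rfl⟩
    have hrecw : ∀ k, (q:ℤ) * s (k+1) = p * s k + w k := fun k => (hsk k).1
    have hwd : ∀ k, 0 ≤ w k ∧ w k ≤ (p:ℤ) - 1 := by
      intro k; have := (hsk k).2; simpa [Ap, Set.mem_Icc] using this
    have habsw : ∀ i, |(w i : ℝ)| ≤ p := by
      intro i
      have h := hwd i
      have : |w i| ≤ (p:ℤ) := by rw [abs_le]; omega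
      rw [← Int.cast_abs]
      exact_mod_cast this
    constructor
    · have hst := state_le hq hpq (tmin n) s (mw n) w (hrecmin n) hrecw 0
        (by rw [htmin0, hs0]; omega)
        (by intro k; have := hmwd n k; have := hwd k; omega)
      have := rho_le_rho hq hpq (mw n) w (tmin n) s (hrecmin n) hrecw
        (habsmw n) habsw 0
        (by intro N; have := hst N; push_cast; exact_mod_cast this)
      rw [htmin0, hs0] at this
      linarith
    · have hst := state_le hq hpq s (tmax n) w (mx n) hrecw (hrecmax n) 0
        (by rw [htmax0, hs0]; omega)
        (by intro k; have := hmxd n k; have := hwd k; omega)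
      have := rho_le_rho hq hpq w (mx n) s (tmax n) hrecw (hrecmax n)
        habsw (habsmx n) 0
        (by intro N; have := hst N; push_cast; exact_mod_cast this)
      rw [htmax0, hs0] at this
      linarith
  · rintro ⟨hx1, hx2⟩
    have Hex' : ∀ (m : ℕ) (y : ℝ), ∃ (a : ℤ) (m' : ℕ),
        (rho p q (mw m) ≤ y ∧ y ≤ rho p q (mx m)) →
        (a ∈ Ap p ∧ (q:ℤ) * m' = p * m + a ∧
          (a:ℝ)/p + ((q:ℝ)/p) * rho p q (mw m') ≤ y ∧
          y ≤ (a:ℝ)/p + ((q:ℝ)/p) * rho p q (mx m')) := by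
      intro m y
      by_cases h : rho p q (mw m) ≤ y ∧ y ≤ rho p q (mx m)
      · obtain ⟨a, m', h1, h2, h3, h4⟩ := Hex m y h.1 h.2
        exact ⟨a, m', fun _ => ⟨h1, h2, h3, h4⟩⟩
      · exact ⟨0, 0, fun h' => absurd h' h⟩
    choose A M hAM using Hex'
    set F : ℕ → ℕ × ℝ := fun N =>
      Nat.rec (n, x) (fun _ r => (M r.1 r.2, ((p:ℝ)/q) * (r.2 - (A r.1 r.2 : ℝ)/p))) N with hF
    have hFs : ∀ N, F (N+1)
        = (M (F N).1 (F N).2, ((p:ℝ)/q) * ((F N).2 - (A (F N).1 (F N).2 : ℝ)/p)) :=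
      fun N => rfl
    have hinv : ∀ N, rho p q (mw (F N).1) ≤ (F N).2 ∧ (F N).2 ≤ rho p q (mx (F N).1) := by
      intro N
      induction N with
      | zero => exact ⟨hx1, hx2⟩
      | succ N ih =>
          obtain ⟨hA, hrec, h3, h4⟩ := hAM (F N).1 (F N).2 ih
          rw [hFs N]
          constructor
          · have key : ((p:ℝ)/q) * ((F N).2 - (A (F N).1 (F N).2 : ℝ)/p)
                - rho p q (mw (M (F N).1 (F N).2))
                = ((p:ℝ)/q) * ((F N).2 - ((A (F N).1 (F N).2 : ℝ)/p
                    + ((q:ℝ)/p) * rho p q (mw (M (F N).1 (F N).2)))) := by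
              field_simp
              ring
            have hpos : (0:ℝ) ≤ ((p:ℝ)/q) * ((F N).2 - ((A (F N).1 (F N).2 : ℝ)/p
                + ((q:ℝ)/p) * rho p q (mw (M (F N).1 (F N).2)))) :=
              mul_nonneg (by positivity) (by linarith)
            linarith [key]
          · have key : rho p q (mx (M (F N).1 (F N).2))
                - ((p:ℝ)/q) * ((F N).2 - (A (F N).1 (F N).2 : ℝ)/p)
                = ((p:ℝ)/q) * (((A (F N).1 (F N).2 : ℝ)/p
                    + ((q:ℝ)/p) * rho p q (mx (M (F N).1 (F N).2))) - (F N).2) := by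
              field_simp
              ring
            have hpos : (0:ℝ) ≤ ((p:ℝ)/q) * (((A (F N).1 (F N).2 : ℝ)/p
                + ((q:ℝ)/p) * rho p q (mx (M (F N).1 (F N).2))) - (F N).2) :=
              mul_nonneg (by positivity) (by linarith)
            linarith [key]
    set w : ℕ → ℤ := fun N => A (F N).1 (F N).2 with hwdef
    set s : ℕ → ℕ := fun N => (F N).1 with hsdef
    have hbranch : ∀ k, (q:ℤ) * s (k+1) = p * s k + w k ∧ w k ∈ Ap p := by
      intro k
      obtain ⟨hA, hrec, _, _⟩ := hAM (F k).1 (F k).2 (hinv k)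
      refine ⟨?_, hA⟩
      show (q:ℤ) * ((F (k+1)).1 : ℤ) = p * ((F k).1 : ℤ) + A (F k).1 (F k).2
      rw [hFs k]
      exact hrec
    have hwdig : ∀ k, 0 ≤ w k ∧ w k ≤ (p:ℤ) - 1 := by
      intro k; have := (hbranch k).2; simpa [Ap, Set.mem_Icc] using this
    have habsw : ∀ i, |(w i : ℝ)| ≤ p := by
      intro i
      have h := hwdig i
      have : |w i| ≤ (p:ℤ) := by rw [abs_le]; omega
      rw [← Int.cast_abs]
      exact_mod_cast this
    refine ⟨w, ⟨s, rfl, hbranch⟩, ?_⟩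
    have hkey : ∀ N, (∑ i ∈ Finset.range N, ((w i : ℝ)/q) * ((q:ℝ)/p)^(i+1))
        + ((q:ℝ)/p)^N * (F N).2 = x := by
      intro N
      induction N with
      | zero => simp; rfl
      | succ N ih =>
          rw [Finset.sum_range_succ]
          have hF2 : (F (N+1)).2 = ((p:ℝ)/q) * ((F N).2 - (w N : ℝ)/p) := by
            rw [hFs N]
          rw [hF2]
          have ha : ((q:ℝ)/p)^(N+1) * (((p:ℝ)/q) * ((F N).2 - (w N : ℝ)/p))
              = ((q:ℝ)/p)^N * (F N).2 - ((w N : ℝ)/q) * ((q:ℝ)/p)^(N+1) := by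
            rw [pow_succ]
            field_simp
          rw [ha]
          linarith [ih]
    have hsum := summable_rho hq hpq w habsw
    have htends1 : Filter.Tendsto
        (fun N => ∑ i ∈ Finset.range N, ((w i : ℝ)/q) * ((q:ℝ)/p)^(i+1))
        Filter.atTop (nhds (rho p q w)) := hsum.hasSum.tendsto_sum_nat
    have hzero : Filter.Tendsto (fun N => ((q:ℝ)/p)^N * (F N).2) Filter.atTop (nhds 0) := by
      apply squeeze_zero
      · intro N
        exact mul_nonneg (pow_nonneg hc0.le N)
          ((rho_nonneg hq hpq (mw (F N).1) (fun i => (hmwd (F N).1 i).1)).trans (hinv N).1)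
      · intro N
        exact mul_le_mul_of_nonneg_left
          ((hinv N).2.trans (rho_le_Bnd hq hpq (mx (F N).1)
            (fun i => by have := hmxd (F N).1 i; omega) (habsmx (F N).1)))
          (pow_nonneg hc0.le N)
      · simpa using (tendsto_pow_atTop_nhds_zero_of_lt_one hc0.le hc1).mul_const (Bnd p q)
    have htends2 : Filter.Tendsto
        (fun N => ∑ i ∈ Finset.range N, ((w i : ℝ)/q) * ((q:ℝ)/p)^(i+1))
        Filter.atTop (nhds (x - 0)) := by
      have heq : (fun N => ∑ i ∈ Finset.range N, ((w i : ℝ)/q) * ((q:ℝ)/p)^(i+1))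
          = (fun N => x - ((q:ℝ)/p)^N * (F N).2) := by
        funext N
        linarith [hkey N]
      rw [heq]
      exact Filter.Tendsto.sub tendsto_const_nhds hzero
    have hxx := tendsto_nhds_unique htends1 htends2
    rw [sub_zero] at hxx
    exact hxx.symm
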